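/- If r is an element of a rotation group D on a three-dimensional real vector space V such that r maps the pair (half-plane ℝv + ℝ≥0 w, ray ℝ≥0 v) to the pair (ℝ(-v) + ℝ≥0 w, ℝ≥0 (-v)) for linearly independent vectors v, w, then r² = id and r v = -v. -/
import Mathlib


/-- The ray (half-line) spanned by `v`: all nonnegative multiples of `v`. -/
def Ray' {V : Type*} [AddCommGroup V] [Module ℝ V] (v : V) : Set V :=
  {x | ∃ c : ℝ, 0 ≤ c ∧ x = c • v}

/-- The half-plane `ℝ v + ℝ≥0 w`. -/
def HalfPlane {V : Type*} [AddCommGroup V] [Module ℝ V] (v w : V) : Set V :=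
  {x | ∃ a b : ℝ, 0 ≤ b ∧ x = a • v + b • w}

/-- `D` is a rotation group: for any two pairs of (half-plane, ray on its boundary)
there is exactly one element of `D` mapping the first pair to the second. -/
def IsRotationGroup {V : Type*} [AddCommGroup V] [Module ℝ V]
    (D : Subgroup (V ≃ₗ[ℝ] V)) : Prop :=
  ∀ v w v' w' : V, LinearIndependent ℝ ![v, w] → LinearIndependent ℝ ![v', w'] →
    ∃! d : V ≃ₗ[ℝ] V, d ∈ D ∧
      (d : V ≃ₗ[ℝ] V) '' HalfPlane v w = HalfPlane v' w' ∧
      (d : V ≃ₗ[ℝ] V) '' Ray' v = Ray' v'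

/-- `w ⊥ v` : some rotation sends `w` to `-w` and fixes `v`. -/
def Perp {V : Type*} [AddCommGroup V] [Module ℝ V]
    (D : Subgroup (V ≃ₗ[ℝ] V)) (w v : V) : Prop :=
  ∃ r ∈ D, r w = -w ∧ r v = v


section Aux
variable {V : Type*} [AddCommGroup V] [Module ℝ V]

lemma ray_image (f : V ≃ₗ[ℝ] V) (v : V) : f '' Ray' v = Ray' (f v) := by
  ext x
  constructor
  · rintro ⟨y, ⟨c, hc, rfl⟩, rfl⟩
    exact ⟨c, hc, by simp [map_smul]⟩
  · rintro ⟨c, hc, rfl⟩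
    exact ⟨c • v, ⟨c, hc, rfl⟩, by simp [map_smul]⟩

lemma hp_image (f : V ≃ₗ[ℝ] V) (v w : V) :
    f '' HalfPlane v w = HalfPlane (f v) (f w) := by
  ext x
  constructor
  · rintro ⟨y, ⟨a, b, hb, rfl⟩, rfl⟩
    exact ⟨a, b, hb, by simp [map_add, map_smul]⟩
  · rintro ⟨a, b, hb, rfl⟩
    exact ⟨a • v + b • w, ⟨a, b, hb, rfl⟩, by simp [map_add, map_smul]⟩

lemma hp_neg (v w : V) : HalfPlane (-v) w = HalfPlane v w := by
  ext x
  constructor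
  · rintro ⟨a, b, hb, rfl⟩
    exact ⟨-a, b, hb, by simp⟩
  · rintro ⟨a, b, hb, rfl⟩
    exact ⟨-a, b, hb, by simp⟩

lemma ray_smul {c : ℝ} (hc : 0 < c) (v : V) : Ray' (c • v) = Ray' v := by
  ext x
  constructor
  · rintro ⟨d, hd, rfl⟩
    exact ⟨d * c, by positivity, by rw [mul_smul]⟩
  · rintro ⟨d, hd, rfl⟩
    refine ⟨d / c, by positivity, ?_⟩
    rw [smul_smul, div_mul_cancel₀ _ hc.ne']

end Aux

theorem stmt0 {V : Type*} [AddCommGroup V] [Module ℝ V]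
    (hdim : Module.finrank ℝ V = 3)
    (D : Subgroup (V ≃ₗ[ℝ] V)) (hD : IsRotationGroup D)
    (v w : V) (hvw : LinearIndependent ℝ ![v, w])
    (r : V ≃ₗ[ℝ] V) (hr : r ∈ D)
    (hH : (r : V ≃ₗ[ℝ] V) '' HalfPlane v w = HalfPlane (-v) w)
    (hR : (r : V ≃ₗ[ℝ] V) '' Ray' v = Ray' (-v)) :
    r ^ 2 = 1 ∧ r v = -v := by
  have hv : v ≠ 0 := by
    have := hvw.ne_zero 0
    simpa using this
  -- r v lies in Ray' (-v)
  have hrv : Ray' (r v) = Ray' (-v) := by rw [← ray_image, hR]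
  have hmem : r v ∈ Ray' (-v) := by
    rw [← hrv]; exact ⟨1, zero_le_one, (one_smul _ _).symm⟩
  obtain ⟨c, hc, hcv⟩ := hmem
  have hcpos : 0 < c := by
    rcases hc.lt_or_eq with h | h
    · exact h
    · exfalso
      apply hv
      have : r v = 0 := by rw [hcv, ← h, zero_smul]
      have := r.injective (by simpa using this)
      exact this
  have hr2 : ⇑(r ^ 2) = ⇑r ∘ ⇑r := by
    ext x; rw [pow_two]; rfl
  -- r ^ 2 fixes the half-plane and the ray
  have hH2 : (↑(r ^ 2) : V ≃ₗ[ℝ] V) '' HalfPlane v w = HalfPlane v w := by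
    rw [hr2, Set.image_comp, hH, hp_neg, hH, hp_neg]
  have hRneg : (r : V ≃ₗ[ℝ] V) '' Ray' (-v) = Ray' v := by
    rw [ray_image, map_neg, hcv]
    have : -(c • -v) = c • v := by simp
    rw [this, ray_smul hcpos]
  have hR2 : (↑(r ^ 2) : V ≃ₗ[ℝ] V) '' Ray' v = Ray' v := by
    rw [hr2, Set.image_comp, hR, hRneg]
  obtain ⟨d, _, hu⟩ := hD v w v w hvw hvw
  have h1 : r ^ 2 = 1 := by
    have e1 := hu (r ^ 2) ⟨pow_mem hr 2, hH2, hR2⟩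
    have e2 := hu 1 ⟨one_mem D, by simp, by simp⟩
    rw [e1, e2]
  refine ⟨h1, ?_⟩
  -- r ^ 2 v = c ^ 2 • v = v gives c = 1
  have hsq : (c * c) • v = v := by
    have : (r ^ 2) v = v := by rw [h1]; rfl
    rw [pow_two] at this
    have h2 : r (r v) = v := this
    rw [hcv, map_smul, map_neg, hcv] at h2
    simpa [smul_smul] using h2
  have hc1 : c * c = 1 := by
    by_contra h
    have := sub_smul (c * c) 1 v
    have hz : (c * c - 1) • v = 0 := by rw [sub_smul, hsq, one_smul, sub_self]
    exact hv (by
      have := smul_eq_zero.mp hz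
      rcases this with h' | h'
      · exact absurd (by linarith [sub_eq_zero.mp h']) h
      · exact h')
  have : c = 1 := by nlinarith
  rw [hcv, this, one_smul]
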